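/- For every integer N ≥ 2, a_{2,1}(N+1,x) = 6·x·(−1)^N·N!·H_{N,2}. -/

import Mathlib

open Finset

/-- Generalized harmonic numbers `H_{N,j}`: `H_{N,0} = 1`,
`H_{N,1} = 1 + 1/2 + ⋯ + 1/N`, and `H_{N,j} = ∑_{l=j}^{N} H_{l-1,j-1}/l` for `j ≥ 2`. -/
def genHarmonic : ℕ → ℕ → ℚ
  | _, 0 => 1
  | N, 1 => ∑ i ∈ Finset.range N, (1 : ℚ) / (i + 1)
  | N, (j+2) => ∑ l ∈ Finset.Icc (j+2) N, genHarmonic (l-1) (j+1) / l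
termination_by N j => j

/-- The coefficients `a_{i,j}(N, x)` arising from repeated differentiation of the
λ-Changhee generating function: `a_{0,0}(N,x) = 0`, `a_{1,0}(1,x) = -1`, `a_{0,1}(1,x) = x`,
and for `N ≥ 1`, `i, j ≥ 0` with `1 ≤ i + j ≤ N + 1`,
`a_{i,j}(N+1,x) = -N·a_{i,j}(N,x) - i·a_{i-1,j}(N,x) + (x - j + 1)·a_{i,j-1}(N,x)`,
with the convention that `a_{i,j}(N,x) = 0` whenever `i < 0`, `j < 0`, or `i + j > N`. -/
noncomputable def aCh : ℕ → ℤ → ℤ → ℝ → ℝ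
  | 0, _, _, _ => 0
  | 1, i, j, x => if i = 1 ∧ j = 0 then -1 else if i = 0 ∧ j = 1 then x else 0
  | (N+2), i, j, x =>
      if 0 ≤ i ∧ 0 ≤ j ∧ 1 ≤ i + j ∧ i + j ≤ N + 2 then
        -(N+1 : ℝ) * aCh (N+1) i j x - (i : ℝ) * aCh (N+1) (i-1) j x
          + (x - (j : ℝ) + 1) * aCh (N+1) i (j-1) x
      else 0

lemma aCh_neg_j (N : ℕ) (i : ℤ) (x : ℝ) : aCh N i (-1) x = 0 := by
  match N with
  | 0 => rfl
  | 1 => simp [aCh]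
  | (n+2) => rw [aCh]; simp

lemma aCh_zero_zero (N : ℕ) (x : ℝ) : aCh N 0 0 x = 0 := by
  match N with
  | 0 => rfl
  | 1 => simp [aCh]
  | (n+2) => rw [aCh]; simp

lemma aCh_neg_i (N : ℕ) (j : ℤ) (x : ℝ) : aCh N (-1) j x = 0 := by
  match N with
  | 0 => rfl
  | 1 => simp [aCh]
  | (n+2) => rw [aCh]; simp

lemma gH1_succ (N : ℕ) : genHarmonic (N+1) 1 = genHarmonic N 1 + 1/(N+1) := by
  simp [genHarmonic, Finset.sum_range_succ]

lemma gH2_succ (N : ℕ) (h : 1 ≤ N) :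
    genHarmonic (N+1) 2 = genHarmonic N 2 + genHarmonic N 1 / (N+1) := by
  rw [genHarmonic, genHarmonic, Finset.sum_Icc_succ_top (by omega)]
  simp [genHarmonic]

lemma gH1_succ' (N : ℕ) :
    ((genHarmonic (N+1) 1 : ℚ) : ℝ) = (genHarmonic N 1 : ℝ) + 1/(N+1) := by
  have := congrArg (fun q : ℚ => (q : ℝ)) (gH1_succ N)
  push_cast at this
  simpa using this

lemma gH2_succ' (N : ℕ) (h : 1 ≤ N) :
    ((genHarmonic (N+1) 2 : ℚ) : ℝ)
      = (genHarmonic N 2 : ℝ) + (genHarmonic N 1 : ℝ) / (N+1) := by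
  have := congrArg (fun q : ℚ => (q : ℝ)) (gH2_succ N h)
  push_cast at this
  simpa using this

lemma aCh_one_zero (N : ℕ) (x : ℝ) :
    aCh (N+1) 1 0 x = (-1 : ℝ)^(N+1) * (Nat.factorial N : ℝ) := by
  induction N with
  | zero => simp [aCh]
  | succ n ih =>
      rw [show n+1+1 = n+2 from rfl, aCh]
      rw [if_pos (by constructor <;> omega)]
      simp only [show (1:ℤ)-1 = 0 from rfl, show (0:ℤ)-1 = -1 from rfl,
        aCh_zero_zero, aCh_neg_j, ih]
      rw [Nat.factorial_succ]
      push_cast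
      ring

lemma aCh_zero_one (N : ℕ) (x : ℝ) :
    aCh (N+1) 0 1 x = (-1 : ℝ)^N * (Nat.factorial N : ℝ) * x := by
  induction N with
  | zero => simp [aCh]
  | succ n ih =>
      rw [show n+1+1 = n+2 from rfl, aCh]
      rw [if_pos (by constructor <;> omega)]
      simp only [show (0:ℤ)-1 = -1 from rfl, show (1:ℤ)-1 = 0 from rfl,
        aCh_zero_zero, aCh_neg_i, ih]
      rw [Nat.factorial_succ]
      push_cast
      ring

lemma aCh_two_zero (N : ℕ) (x : ℝ) :
    aCh (N+1) 2 0 x = 2 * (-1 : ℝ)^(N+1) * (Nat.factorial N : ℝ) * (genHarmonic N 1 : ℝ) := by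
  induction N with
  | zero => simp [aCh, genHarmonic]
  | succ n ih =>
      rw [show n+1+1 = n+2 from rfl, aCh]
      rw [if_pos (by constructor <;> omega)]
      simp only [show (2:ℤ)-1 = 1 from rfl, show (0:ℤ)-1 = -1 from rfl,
        aCh_neg_j, ih, aCh_one_zero]
      rw [gH1_succ', Nat.factorial_succ]
      have h0 : (n : ℝ) + 1 ≠ 0 := by positivity
      push_cast
      field_simp
      ring

lemma aCh_one_one (N : ℕ) (x : ℝ) :
    aCh (N+1) 1 1 x = 2 * (-1 : ℝ)^N * (Nat.factorial N : ℝ) * (genHarmonic N 1 : ℝ) * x := by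
  induction N with
  | zero => simp [aCh, genHarmonic]
  | succ n ih =>
      rw [show n+1+1 = n+2 from rfl, aCh]
      rw [if_pos (by constructor <;> omega)]
      simp only [show (1:ℤ)-1 = 0 from rfl, ih, aCh_zero_one, aCh_one_zero]
      rw [gH1_succ', Nat.factorial_succ]
      have h0 : (n : ℝ) + 1 ≠ 0 := by positivity
      push_cast
      field_simp
      ring

lemma aCh_two_one' (N : ℕ) (x : ℝ) :
    aCh (N+1) 2 1 x = 6 * x * (-1 : ℝ)^N * (Nat.factorial N : ℝ) * (genHarmonic N 2 : ℝ) := by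
  induction N with
  | zero => simp [aCh, genHarmonic]
  | succ n ih =>
      rw [show n+1+1 = n+2 from rfl, aCh]
      rcases Nat.eq_zero_or_pos n with rfl | hn
      · rw [if_neg (by omega)]
        have : genHarmonic 1 2 = 0 := by simp [genHarmonic]
        rw [this]
        simp
      · rw [if_pos (by constructor <;> omega)]
        simp only [show (2:ℤ)-1 = 1 from rfl, show (1:ℤ)-1 = 0 from rfl,
          ih, aCh_one_one, aCh_two_zero]
        rw [gH2_succ' n hn, Nat.factorial_succ]
        have h0 : (n : ℝ) + 1 ≠ 0 := by positivity
        push_cast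
        field_simp
        ring

/-- For `N ≥ 2`, `a_{2,1}(N+1,x) = 6·x·(-1)^N·N!·H_{N,2}`. -/
theorem aCh_two_one (N : ℕ) (hN : 2 ≤ N) (x : ℝ) :
    aCh (N + 1) 2 1 x
      = 6 * x * (-1 : ℝ) ^ N * (Nat.factorial N : ℝ) * (genHarmonic N 2 : ℝ) := by
  exact aCh_two_one' N x
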